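/- Maximal folding height bound for the tetrahedron: for every α > 0 and every ω ∈ S², the maximal folding height of K^α in direction ω satisfies F_{K^α}(ω) ≤ 2α. -/

import Mathlib

open scoped RealInnerProductSpace

/-- The tetrahedron `K^α = {x : |x₃| ≤ α x₁, |x₂| ≤ α(1 - x₁)}`. -/
noncomputable def Kα (α : ℝ) : Set (EuclideanSpace ℝ (Fin 3)) :=
  {x | |x 2| ≤ α * x 0 ∧ |x 1| ≤ α * (1 - x 0)}

/-- The support function `H_K(ω) = sup {⟨x, ω⟩ : x ∈ K}`. -/
noncomputable def suppFn (K : Set (EuclideanSpace ℝ (Fin 3)))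
    (ω : EuclideanSpace ℝ (Fin 3)) : ℝ :=
  sSup ((fun x => ⟪x, ω⟫) '' K)

/-- The breadth `B_K(ω) = H_K(ω) + H_K(-ω)`. -/
noncomputable def breadthFn (K : Set (EuclideanSpace ℝ (Fin 3)))
    (ω : EuclideanSpace ℝ (Fin 3)) : ℝ :=
  suppFn K ω + suppFn K (-ω)

/-- The cap `K_{λ,ω} = {x ∈ K : ⟨x,ω⟩ ≥ λ}`. -/
noncomputable def capSet (K : Set (EuclideanSpace ℝ (Fin 3)))
    (ω : EuclideanSpace ℝ (Fin 3)) (lam : ℝ) : Set (EuclideanSpace ℝ (Fin 3)) :=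
  {x ∈ K | lam ≤ ⟪x, ω⟫}

/-- The reflection `T_{λ,ω}(x) = x - 2ω(⟨ω,x⟩ - λ)`. -/
noncomputable def reflMap (ω : EuclideanSpace ℝ (Fin 3)) (lam : ℝ)
    (x : EuclideanSpace ℝ (Fin 3)) : EuclideanSpace ℝ (Fin 3) :=
  x - (2 * (⟪ω, x⟫ - lam)) • ω

/-- The maximal folding cap `K_ω = ∪ {K_{λ,ω} : T_{λ,ω}(K_{λ,ω}) ⊆ K}`. -/
noncomputable def maxFoldCap (K : Set (EuclideanSpace ℝ (Fin 3)))
    (ω : EuclideanSpace ℝ (Fin 3)) : Set (EuclideanSpace ℝ (Fin 3)) :=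
  ⋃ lam ∈ {lam : ℝ | reflMap ω lam '' capSet K ω lam ⊆ K}, capSet K ω lam

/-- The maximal folding height `F_K(ω) = B_{K_ω}(ω)`. -/
noncomputable def foldHeight (K : Set (EuclideanSpace ℝ (Fin 3)))
    (ω : EuclideanSpace ℝ (Fin 3)) : ℝ :=
  breadthFn (maxFoldCap K ω) ω

private lemma inner3 (x y : EuclideanSpace ℝ (Fin 3)) :
    ⟪x, y⟫ = x 0 * y 0 + x 1 * y 1 + x 2 * y 2 := by
  simp [PiLp.inner_apply, Fin.sum_univ_three, RCLike.inner_apply]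
  ring

private lemma refl_apply (ω z : EuclideanSpace ℝ (Fin 3)) (lam : ℝ) (i : Fin 3) :
    reflMap ω lam z i = z i - 2 * (⟪ω, z⟫ - lam) * ω i := by
  simp [reflMap, PiLp.sub_apply, PiLp.smul_apply, smul_eq_mul]

set_option maxHeartbeats 1000000 in
lemma core_bound (α : ℝ) (hα : 0 < α) (ω : EuclideanSpace ℝ (Fin 3)) (hω : ‖ω‖ = 1)
    (lam : ℝ) (hval : reflMap ω lam '' capSet (Kα α) ω lam ⊆ Kα α)
    (x : EuclideanSpace ℝ (Fin 3)) (hx : x ∈ Kα α) (hlx : lam ≤ ⟪x, ω⟫) :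
    ⟪x, ω⟫ - lam ≤ 2 * α := by
  by_contra hcon
  push_neg at hcon
  set s := ω 0 with hs
  set u := ω 1 with hu
  set v := ω 2 with hv
  have hωn : s ^ 2 + u ^ 2 + v ^ 2 = 1 := by
    have h : ⟪ω, ω⟫ = 1 := by rw [real_inner_self_eq_norm_mul_norm, hω]; norm_num
    rw [PiLp.inner_apply] at h
    simp only [Fin.sum_univ_three, RCLike.inner_apply, conj_trivial] at h
    nlinarith [h]
  have hu1 : |u| ≤ 1 := by nlinarith [sq_abs u, sq_abs v, sq_abs s, abs_nonneg u, abs_nonneg v, abs_nonneg s]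
  have hv1 : |v| ≤ 1 := by nlinarith [sq_abs u, sq_abs v, sq_abs s, abs_nonneg u, abs_nonneg v, abs_nonneg s]
  obtain ⟨hx2, hx1⟩ := hx
  have hx0 : 0 ≤ x 0 := by nlinarith [abs_nonneg (x 2)]
  have hx0' : x 0 ≤ 1 := by nlinarith [abs_nonneg (x 1)]
  have hxle : ⟪x, ω⟫ ≤ max (α * |u|) (s + α * |v|) := by
    rw [inner3]
    have h1 : x 1 * u ≤ |x 1| * |u| := by
      calc x 1 * u ≤ |x 1 * u| := le_abs_self _
      _ = |x 1| * |u| := abs_mul _ _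
    have h2 : x 2 * v ≤ |x 2| * |v| := by
      calc x 2 * v ≤ |x 2 * v| := le_abs_self _
      _ = |x 2| * |v| := abs_mul _ _
    have hc : |x 1| * |u| ≤ (α * (1 - x 0)) * |u| :=
      mul_le_mul_of_nonneg_right hx1 (abs_nonneg u)
    have hd : |x 2| * |v| ≤ (α * x 0) * |v| :=
      mul_le_mul_of_nonneg_right hx2 (abs_nonneg v)
    have he : (1 - x 0) * (α * |u|) ≤ (1 - x 0) * max (α * |u|) (s + α * |v|) :=
      mul_le_mul_of_nonneg_left (le_max_left _ _) (by linarith)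
    have hf : x 0 * (s + α * |v|) ≤ x 0 * max (α * |u|) (s + α * |v|) :=
      mul_le_mul_of_nonneg_left (le_max_right _ _) hx0
    nlinarith [h1, h2, hc, hd, he, hf]
  -- helper to finish from the two key inequalities
  have finish : ∀ s' u' v' : ℝ, |u'| ≤ α * s' → |v'| + α * s' ≤ 0 →
      s' ^ 2 + u' ^ 2 + v' ^ 2 = 1 → False := by
    intro s' u' v' hus hvs hn
    have h1 : |u'| = 0 := le_antisymm (by linarith [abs_nonneg v']) (abs_nonneg u')
    have h2 : |v'| = 0 := le_antisymm (by linarith [abs_nonneg u']) (abs_nonneg v')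
    have hαs : α * s' = 0 := le_antisymm (by linarith [abs_nonneg v']) (by linarith [abs_nonneg u'])
    have hs0 : s' = 0 := by
      rcases mul_eq_zero.mp hαs with h | h
      · exact absurd h hα.ne'
      · exact h
    have hu0 : u' = 0 := abs_eq_zero.mp h1
    have hv0 : v' = 0 := abs_eq_zero.mp h2
    rw [hs0, hu0, hv0] at hn; norm_num at hn
  rcases le_total (s + α * |v|) (α * |u|) with hAB | hAB
  · -- Case A : top is the vertex (0, ±α, 0); reflect the opposite one (0, ∓α, 0)
    have hmax : max (α * |u|) (s + α * |v|) = α * |u| := max_eq_left hAB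
    have hh : 2 * α < α * |u| - lam := by rw [hmax] at hxle; linarith
    set ε : ℝ := if 0 ≤ u then 1 else -1 with hεdef
    have hεu : ε * u = |u| := by
      rw [hεdef]; split
      · rw [one_mul]; exact (abs_of_nonneg (by assumption)).symm
      · rw [neg_one_mul]; exact (abs_of_neg (by linarith [lt_of_not_ge (by assumption)])).symm
    have hεε : ε * ε = 1 := by rw [hεdef]; split <;> norm_num
    have hεabs : |ε| = 1 := by rw [hεdef]; split <;> norm_num
    set z : EuclideanSpace ℝ (Fin 3) := EuclideanSpace.single 1 (-(ε * α)) with hzdef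
    have hz0 : z 0 = 0 := by simp [hzdef, EuclideanSpace.single_apply]
    have hz1 : z 1 = -(ε * α) := by simp [hzdef, EuclideanSpace.single_apply]
    have hz2 : z 2 = 0 := by simp [hzdef, EuclideanSpace.single_apply]
    have hzK : z ∈ Kα α := by
      constructor
      · rw [hz2, hz0]; simp
      · rw [hz1, hz0]
        have : |(-(ε * α))| = α := by
          rw [abs_neg, abs_mul, hεabs, one_mul, abs_of_pos hα]
        rw [this]; linarith
    have hzinner : ⟪z, ω⟫ = -(α * |u|) := by
      rw [inner3, hz0, hz1, hz2]
      linear_combination (-α) * hεu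
    have h2αu : 2 * α * |u| ≤ 2 * α := by nlinarith [hu1]
    have hzcap : z ∈ capSet (Kα α) ω lam := ⟨hzK, by rw [hzinner]; linarith⟩
    have hwK : reflMap ω lam z ∈ Kα α := hval ⟨z, hzcap, rfl⟩
    have hωz : ⟪ω, z⟫ = -(α * |u|) := by rw [real_inner_comm]; exact hzinner
    set h' : ℝ := ⟪ω, z⟫ - lam with hh'def
    have hh' : 0 < h' := by rw [hh'def, hωz]; linarith
    obtain ⟨hw2, hw1⟩ := hwK
    simp only [refl_apply] at hw2 hw1
    rw [← hh'def] at hw2 hw1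
    simp only [hz0, hz1, hz2] at hw2 hw1
    -- hw2 : |0 - 2*h'*v| ≤ α * (0 - 2*h'*s)
    have habs2 : |0 - 2 * h' * v| = 2 * h' * |v| := by
      rw [show (0 - 2 * h' * v) = (2 * h') * (-v) by ring, abs_mul, abs_neg,
        abs_of_pos (by linarith : (0:ℝ) < 2 * h')]
    rw [habs2] at hw2
    have hvs : |v| + α * s ≤ 0 := by nlinarith [hw2, hh']
    have hεabsu : ε * |u| = u := by linear_combination u * hεε - ε * hεu
    have habs1 : |(-(ε * α)) - 2 * h' * u| = α + 2 * h' * |u| := by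
      have heq : (-(ε * α)) - 2 * h' * u = (-ε) * (α + 2 * h' * |u|) := by
        linear_combination (2 * h') * hεabsu
      rw [heq, abs_mul, abs_neg, hεabs, one_mul,
        abs_of_nonneg (by positivity : (0:ℝ) ≤ α + 2 * h' * |u|)]
    rw [habs1] at hw1
    have hus : |u| ≤ α * s := by nlinarith [hw1, hh']
    exact finish s u v hus hvs hωn
  · -- Case B : top is the vertex (1, 0, ±α); reflect the opposite one (1, 0, ∓α)
    have hmax : max (α * |u|) (s + α * |v|) = s + α * |v| := max_eq_right hAB
    have hh : 2 * α < (s + α * |v|) - lam := by rw [hmax] at hxle; linarith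
    set δ : ℝ := if 0 ≤ v then 1 else -1 with hδdef
    have hδv : δ * v = |v| := by
      rw [hδdef]; split
      · rw [one_mul]; exact (abs_of_nonneg (by assumption)).symm
      · rw [neg_one_mul]; exact (abs_of_neg (by linarith [lt_of_not_ge (by assumption)])).symm
    have hδδ : δ * δ = 1 := by rw [hδdef]; split <;> norm_num
    have hδabs : |δ| = 1 := by rw [hδdef]; split <;> norm_num
    set z : EuclideanSpace ℝ (Fin 3) :=
      EuclideanSpace.single 0 1 + EuclideanSpace.single 2 (-(δ * α)) with hzdef
    have hz0 : z 0 = 1 := by simp [hzdef, EuclideanSpace.single_apply]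
    have hz1 : z 1 = 0 := by simp [hzdef, EuclideanSpace.single_apply]
    have hz2 : z 2 = -(δ * α) := by simp [hzdef, EuclideanSpace.single_apply]
    have hzK : z ∈ Kα α := by
      constructor
      · rw [hz2, hz0]
        have : |(-(δ * α))| = α := by
          rw [abs_neg, abs_mul, hδabs, one_mul, abs_of_pos hα]
        rw [this]; linarith
      · rw [hz1, hz0]; simp
    have hzinner : ⟪z, ω⟫ = s - α * |v| := by
      rw [inner3, hz0, hz1, hz2]
      linear_combination (-α) * hδv
    have h2αv : 2 * α * |v| ≤ 2 * α := by nlinarith [hv1]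
    have hzcap : z ∈ capSet (Kα α) ω lam := ⟨hzK, by rw [hzinner]; linarith⟩
    have hwK : reflMap ω lam z ∈ Kα α := hval ⟨z, hzcap, rfl⟩
    have hωz : ⟪ω, z⟫ = s - α * |v| := by rw [real_inner_comm]; exact hzinner
    set h' : ℝ := ⟪ω, z⟫ - lam with hh'def
    have hh' : 0 < h' := by rw [hh'def, hωz]; linarith
    obtain ⟨hw2, hw1⟩ := hwK
    simp only [refl_apply] at hw2 hw1
    rw [← hh'def] at hw2 hw1
    simp only [hz0, hz1, hz2] at hw2 hw1
    have hδabsv : δ * |v| = v := by linear_combination v * hδδ - δ * hδv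
    have habs2 : |(-(δ * α)) - 2 * h' * v| = α + 2 * h' * |v| := by
      have heq : (-(δ * α)) - 2 * h' * v = (-δ) * (α + 2 * h' * |v|) := by
        linear_combination (2 * h') * hδabsv
      rw [heq, abs_mul, abs_neg, hδabs, one_mul,
        abs_of_nonneg (by positivity : (0:ℝ) ≤ α + 2 * h' * |v|)]
    rw [habs2] at hw2
    have hvs : |v| + α * s ≤ 0 := by nlinarith [hw2, hh']
    have habs1 : |0 - 2 * h' * u| = 2 * h' * |u| := by
      rw [show (0 - 2 * h' * u) = (2 * h') * (-u) by ring, abs_mul, abs_neg,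
        abs_of_pos (by linarith : (0:ℝ) < 2 * h')]
    rw [habs1] at hw1
    have hus : |u| ≤ α * s := by nlinarith [hw1, hh']
    exact finish s u v hus hvs hωn

/-- For every `α > 0` and unit vector `ω ∈ S²`, the maximal folding height of the
tetrahedron `K^α` satisfies `F_{K^α}(ω) ≤ 2α`. -/
theorem foldHeight_Kα_le (α : ℝ) (hα : 0 < α)
    (ω : EuclideanSpace ℝ (Fin 3)) (hω : ‖ω‖ = 1) :
    foldHeight (Kα α) ω ≤ 2 * α := by
  unfold foldHeight breadthFn suppFn
  set M := maxFoldCap (Kα α) ω with hM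
  have key : ∀ a ∈ (fun x => ⟪x, ω⟫) '' M, ∀ b ∈ (fun x => ⟪x, -ω⟫) '' M,
      a + b ≤ 2 * α := by
    rintro a ⟨x, hxM, rfl⟩ b ⟨y, hyM, rfl⟩
    rw [hM] at hxM hyM
    simp only [maxFoldCap, Set.mem_iUnion, Set.mem_setOf_eq] at hxM hyM
    obtain ⟨l1, hval1, hx1, hx2⟩ := hxM
    obtain ⟨l2, hval2, hy1, hy2⟩ := hyM
    have hyn : ⟪y, -ω⟫ = -⟪y, ω⟫ := inner_neg_right y ω
    simp only [hyn]
    rcases le_total l1 l2 with h | h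
    · have := core_bound α hα ω hω l1 hval1 x hx1 hx2
      linarith
    · have := core_bound α hα ω hω l2 hval2 x hx1 (le_trans h hx2)
      linarith
  rcases Set.eq_empty_or_nonempty M with hME | ⟨x₀, hx₀⟩
  · rw [hME]
    simp only [Set.image_empty, Real.sSup_empty]
    linarith
  · have hA : ((fun x => ⟪x, ω⟫) '' M).Nonempty := ⟨_, Set.mem_image_of_mem _ hx₀⟩
    have hB : ((fun x => ⟪x, -ω⟫) '' M).Nonempty := ⟨_, Set.mem_image_of_mem _ hx₀⟩
    have h1 : sSup ((fun x => ⟪x, ω⟫) '' M) ≤ 2 * α - sSup ((fun x => ⟪x, -ω⟫) '' M) := by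
      apply csSup_le hA
      intro a ha
      have h2 : sSup ((fun x => ⟪x, -ω⟫) '' M) ≤ 2 * α - a := by
        apply csSup_le hB
        intro b hb
        linarith [key a ha b hb]
      linarith
    linarith
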